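/- For all real numbers p, q with c ≤ p ≤ 1−c and c ≤ q ≤ 1−c (where 0 < c ≤ 1/2), we have √((1−p)(1−q)) + √(pq) ≥ 1 − (p−q)²/(4c(1−c)). -/

import Mathlib

lemma sqrt_aux (a b : ℝ) (ha : 0 ≤ a) (hb : 0 ≤ b) (hab : 0 < a + b) :
    (a + b) / 2 - (a - b) ^ 2 / (2 * (a + b)) ≤ Real.sqrt (a * b) := by
  rcases le_or_gt ((a + b) / 2 - (a - b) ^ 2 / (2 * (a + b))) 0 with h | h
  · exact h.trans (Real.sqrt_nonneg _)
  · rw [show a * b = ((a + b)^2 - (a - b)^2) / 4 by ring]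
    rw [Real.le_sqrt h.le]
    have hne : (a + b) ≠ 0 := ne_of_gt hab
    field_simp
    nlinarith [mul_nonneg (mul_nonneg ha hb) (sq_nonneg (a - b)), mul_pos hab hab,
      sq_nonneg (a - b), mul_nonneg ha hb]
    nlinarith [mul_nonneg ha hb]

theorem stmt_0 (c p q : ℝ) (hc : 0 < c) (hc' : c ≤ 1/2)
    (hp : c ≤ p) (hp' : p ≤ 1 - c) (hq : c ≤ q) (hq' : q ≤ 1 - c) :
    Real.sqrt ((1 - p) * (1 - q)) + Real.sqrt (p * q) ≥
      1 - (p - q) ^ 2 / (4 * c * (1 - c)) := by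
  have hs : 0 < p + q := by linarith
  have hs2 : 0 < (1 - p) + (1 - q) := by linarith
  have h1 := sqrt_aux p q (by linarith) (by linarith) hs
  have h2 := sqrt_aux (1 - p) (1 - q) (by linarith) (by linarith) hs2
  have hd : ((1 - p) - (1 - q)) ^ 2 = (p - q) ^ 2 := by ring
  rw [hd] at h2
  have hden : 4 * c * (1 - c) ≤ (p + q) * ((1 - p) + (1 - q)) := by nlinarith
  have hdpos : 0 < 4 * c * (1 - c) := by nlinarith
  have key : (p - q) ^ 2 / (2 * (p + q)) + (p - q) ^ 2 / (2 * ((1 - p) + (1 - q)))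
      ≤ (p - q) ^ 2 / (4 * c * (1 - c)) := by
    rw [div_add_div _ _ (by positivity) (by positivity),
      div_le_div_iff₀ (by positivity) hdpos]
    nlinarith [mul_le_mul_of_nonneg_left hden (sq_nonneg (p - q))]
  linarith
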